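/- Eckart–Young theorem in the Frobenius norm: let A be a real m × n matrix with singular values σ₁ ≥ σ₂ ≥ … ≥ σ_{min(m,n)} ≥ 0 and let N < min(m,n). Then for every real m × n matrix B of rank at most N one has ‖A − B‖_F² ≥ Σ_{k=N+1}^{min(m,n)} σ_k², and this lower bound is attained by the rank-N truncated singular value decomposition of A; in particular the minimal squared Frobenius error over rank-≤N matrices equals the sum of the squares of the discarded singular values. -/

import Mathlib

open Matrix

lemma EY_frob_eq_trace {a b : Type*} [Fintype a] [Fintype b] (M : Matrix a b ℝ) :
    ∑ i, ∑ j, (M i j) ^ 2 = Matrix.trace (Mᵀ * M) := by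
  rw [Matrix.trace, Finset.sum_comm]
  simp [Matrix.diag, Matrix.mul_apply, sq]

lemma EY_frob_nonneg {a b : Type*} [Fintype a] [Fintype b] (M : Matrix a b ℝ) :
    0 ≤ ∑ i, ∑ j, (M i j) ^ 2 :=
  Finset.sum_nonneg fun _ _ => Finset.sum_nonneg fun _ _ => sq_nonneg _

lemma EY_frob_mul_orth_left {a b : Type*} [Fintype a] [Fintype b] [DecidableEq a]
    (W : Matrix a a ℝ) (M : Matrix a b ℝ) (hW : Wᵀ * W = 1) :
    ∑ i, ∑ j, ((W * M) i j) ^ 2 = ∑ i, ∑ j, (M i j) ^ 2 := by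
  rw [EY_frob_eq_trace, EY_frob_eq_trace, Matrix.transpose_mul, Matrix.mul_assoc,
    ← Matrix.mul_assoc Wᵀ W M, hW, Matrix.one_mul]

lemma EY_frob_mul_orth_right {a b : Type*} [Fintype a] [Fintype b] [DecidableEq b]
    (M : Matrix a b ℝ) (W : Matrix b b ℝ) (hW : W * Wᵀ = 1) :
    ∑ i, ∑ j, ((M * W) i j) ^ 2 = ∑ i, ∑ j, (M i j) ^ 2 := by
  rw [EY_frob_eq_trace, EY_frob_eq_trace, Matrix.transpose_mul,
    Matrix.trace_mul_comm, ← Matrix.mul_assoc (M * W) Wᵀ Mᵀ, Matrix.mul_assoc M W Wᵀ,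
    hW, Matrix.mul_one, Matrix.trace_mul_comm]

lemma EY_frob_mul_le {a b c : Type*} [Fintype a] [Fintype b] [Fintype c] [DecidableEq b] [DecidableEq c]
    (M : Matrix a b ℝ) (P : Matrix b c ℝ) (hP : Pᵀ * P = 1) :
    ∑ i, ∑ j, ((M * P) i j) ^ 2 ≤ ∑ i, ∑ j, (M i j) ^ 2 := by
  set R : Matrix b b ℝ := 1 - P * Pᵀ with hR
  have hRT : Rᵀ = R := by
    simp [hR, Matrix.transpose_sub, Matrix.transpose_mul]
  have hRR : R * R = R := by
    simp only [hR, Matrix.sub_mul, Matrix.mul_sub, Matrix.one_mul, Matrix.mul_one]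
    rw [Matrix.mul_assoc, ← Matrix.mul_assoc Pᵀ P Pᵀ, hP, Matrix.one_mul]
    abel
  have e1 : ((M * R)ᵀ * (M * R)).trace = (M * R * Mᵀ).trace := by
    rw [Matrix.transpose_mul, hRT, Matrix.trace_mul_comm, ← Matrix.mul_assoc,
      Matrix.mul_assoc M R R, hRR]
  have e2 : ((M * P)ᵀ * (M * P)).trace = (M * (P * Pᵀ) * Mᵀ).trace := by
    rw [Matrix.transpose_mul, Matrix.trace_mul_comm, ← Matrix.mul_assoc,
      Matrix.mul_assoc M P Pᵀ]
  have e3 : (Mᵀ * M).trace = (M * (1 : Matrix b b ℝ) * Mᵀ).trace := by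
    rw [Matrix.mul_one]; exact Matrix.trace_mul_comm _ _
  have key : ∑ i, ∑ j, (M i j) ^ 2 - ∑ i, ∑ j, ((M * P) i j) ^ 2
      = ∑ i, ∑ j, ((M * R) i j) ^ 2 := by
    rw [EY_frob_eq_trace, EY_frob_eq_trace, EY_frob_eq_trace, e1, e2, e3, hR,
      Matrix.mul_sub, Matrix.sub_mul, Matrix.trace_sub]
  have := EY_frob_nonneg (M * R)
  linarith

lemma EY_row_le_one {b c : Type*} [Fintype b] [Fintype c] [DecidableEq c]
    (Q : Matrix b c ℝ) (hQ : Qᵀ * Q = 1) (k : b) : ∑ j, (Q k j) ^ 2 ≤ 1 := by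
  set G : Matrix b b ℝ := Q * Qᵀ with hG
  have hGs : ∀ i l, G i l = G l i := by
    intro i l; simp [hG, Matrix.mul_apply, mul_comm]
  have hGG : G * G = G := by
    rw [hG, Matrix.mul_assoc, ← Matrix.mul_assoc Qᵀ Q Qᵀ, hQ, Matrix.one_mul]
  have hc : G k k = ∑ l, (G k l) ^ 2 := by
    conv_lhs => rw [← hGG]
    simp [Matrix.mul_apply, sq]
    exact Finset.sum_congr rfl fun l _ => by rw [hGs l k]
  have hck : G k k = ∑ j, (Q k j) ^ 2 := by simp [hG, Matrix.mul_apply, sq]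
  have h1 : (G k k) ^ 2 ≤ ∑ l, (G k l) ^ 2 :=
    Finset.single_le_sum (f := fun l => (G k l) ^ 2) (fun l _ => sq_nonneg _) (Finset.mem_univ k)
  have h0 : 0 ≤ G k k := by
    rw [hck]; exact Finset.sum_nonneg fun _ _ => sq_nonneg _
  nlinarith [hc, h1, h0, hck]

lemma EY_card_filter (n N : ℕ) (hNn : N ≤ n) :
    ((Finset.univ : Finset (Fin n)).filter (fun k : Fin n => N ≤ (k : ℕ))).card = n - N := by
  rw [Finset.card_filter,
    Fin.sum_univ_eq_sum_range (fun i => if N ≤ i then 1 else 0) n, ← Finset.card_filter]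
  have : (Finset.range n).filter (fun k => N ≤ k) = Finset.Ico N n := by
    ext i; simp [Finset.mem_filter, Finset.mem_range, Finset.mem_Ico]; omega
  rw [this, Nat.card_Ico]

lemma EY_abel (n N : ℕ) (hNn : N < n) (lam c : Fin n → ℝ)
    (hanti : ∀ k l : Fin n, k ≤ l → lam l ≤ lam k)
    (hc0 : ∀ k, 0 ≤ c k) (hc1 : ∀ k, c k ≤ 1)
    (hsum : ∑ k, c k = (n : ℝ) - N) :
    ∑ k ∈ Finset.univ.filter (fun k : Fin n => N ≤ (k : ℕ)), lam k ≤ ∑ k, lam k * c k := by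
  set kN : Fin n := ⟨N, hNn⟩ with hkN
  have pointwise : ∀ k : Fin n,
      (if N ≤ (k : ℕ) then lam k else 0) + lam kN * (c k - (if N ≤ (k : ℕ) then 1 else 0))
        ≤ lam k * c k := by
    intro k
    by_cases h : N ≤ (k : ℕ)
    · simp only [h, if_true]
      have h1 : lam k ≤ lam kN := hanti kN k (by simp [hkN, Fin.le_def, h])
      have h2 : c k - 1 ≤ 0 := by linarith [hc1 k]
      nlinarith
    · simp only [h, if_false]
      have h1 : lam kN ≤ lam k := hanti k kN (by simp [hkN, Fin.le_def]; omega)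
      nlinarith [hc0 k]
  calc ∑ k ∈ Finset.univ.filter (fun k : Fin n => N ≤ (k : ℕ)), lam k
      = ∑ k : Fin n, ((if N ≤ (k : ℕ) then lam k else 0)
          + lam kN * (c k - (if N ≤ (k : ℕ) then 1 else 0))) := by
        rw [Finset.sum_add_distrib, Finset.sum_filter]
        have : ∑ k : Fin n, lam kN * (c k - (if N ≤ (k : ℕ) then 1 else 0))
            = lam kN * (∑ k, c k - ∑ k : Fin n, (if N ≤ (k : ℕ) then (1:ℝ) else 0)) := by
          rw [← Finset.mul_sum, Finset.sum_sub_distrib]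
        rw [this, hsum]
        have hcount : ∑ k : Fin n, (if N ≤ (k : ℕ) then (1:ℝ) else 0) = (n : ℝ) - N := by
          rw [Finset.sum_boole, EY_card_filter n N hNn.le]
          have := Nat.cast_sub (R := ℝ) hNn.le
          rw [this]
        rw [hcount]; ring
    _ ≤ ∑ k, lam k * c k := Finset.sum_le_sum fun k _ => pointwise k

lemma EY_exists_P (m n N : ℕ) (B : Matrix (Fin m) (Fin n) ℝ) (hB : B.rank ≤ N)
    (hNn : N ≤ n) :
    ∃ P : Matrix (Fin n) (Fin (n - N)) ℝ, Pᵀ * P = 1 ∧ B * P = 0 := by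
  classical
  set K : Submodule ℝ (Fin n → ℝ) := LinearMap.ker B.mulVecLin with hK
  have hrank : B.rank + Module.finrank ℝ K = n := by
    have := LinearMap.finrank_range_add_finrank_ker B.mulVecLin
    simpa [Matrix.rank, hK] using this
  have hdim : n - N ≤ Module.finrank ℝ K := by omega
  set e : (Fin n → ℝ) ≃ₗ[ℝ] EuclideanSpace ℝ (Fin n) := (WithLp.linearEquiv 2 ℝ (Fin n → ℝ)).symm with he
  set K' : Submodule ℝ (EuclideanSpace ℝ (Fin n)) := K.map e.toLinearMap with hK'
  have hdim' : n - N ≤ Module.finrank ℝ K' := by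
    have : Module.finrank ℝ K' = Module.finrank ℝ K := by
      rw [hK']
      exact (LinearEquiv.finrank_eq
        (Submodule.equivMapOfInjective e.toLinearMap e.injective K)).symm
    omega
  set b := stdOrthonormalBasis ℝ K' with hb
  set v : Fin (n - N) → EuclideanSpace ℝ (Fin n) :=
    fun j => (b (Fin.castLE hdim' j) : K') with hv
  have hvo : Orthonormal ℝ v := by
    have h1 : Orthonormal ℝ (fun i : Fin (Module.finrank ℝ K') => (b i : EuclideanSpace ℝ (Fin n))) :=
      b.orthonormal.comp_linearIsometry K'.subtypeₗᵢ
    exact h1.comp (Fin.castLE hdim') (Fin.castLE_injective hdim')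
  have hvker : ∀ j, B.mulVec (fun i => v j i) = 0 := by
    intro j
    have hmem : v j ∈ K' := (b (Fin.castLE hdim' j)).2
    rw [hK', Submodule.mem_map] at hmem
    obtain ⟨x, hx, hxe⟩ := hmem
    have : (fun i => v j i) = x := by
      funext i; rw [← hxe]; rfl
    rw [this]
    simpa [hK] using hx
  have hinner := orthonormal_iff_ite.mp hvo
  refine ⟨Matrix.of fun i j => v j i, ?_, ?_⟩
  · ext j j'
    have := hinner j j'
    simp only [PiLp.inner_apply, RCLike.inner_apply, conj_trivial] at this
    simp only [Matrix.mul_apply, Matrix.transpose_apply, Matrix.of_apply, Matrix.one_apply]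
    rw [← this]; exact Finset.sum_congr rfl fun _ _ => mul_comm _ _
  · ext i j
    have := congrFun (hvker j) i
    simpa [Matrix.mul_apply, Matrix.mulVec, dotProduct] using this

lemma EY_sum_cast {a b : ℕ} (hab : b ≤ a) (f : (t : ℕ) → t < b → ℝ) :
    ∑ i : Fin a, (if h : (i : ℕ) < b then f i h else 0) = ∑ k : Fin b, f k k.isLt := by
  have h1 : ∑ i : Fin a, (if h : (i : ℕ) < b then f i h else 0)
      = ∑ t ∈ Finset.range a, (if h : t < b then f t h else 0) :=
    Fin.sum_univ_eq_sum_range (fun t => if h : t < b then f t h else 0) a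
  have h2 : ∑ k : Fin b, f k k.isLt
      = ∑ t ∈ Finset.range b, (if h : t < b then f t h else 0) := by
    rw [← Fin.sum_univ_eq_sum_range (fun t => if h : t < b then f t h else 0) b]
    exact Finset.sum_congr rfl fun k _ => (dif_pos k.isLt).symm
  rw [h1, h2]
  symm
  apply Finset.sum_subset (Finset.range_subset_range.mpr hab)
  intro t _ ht
  rw [dif_neg]
  simp only [Finset.mem_range] at ht
  omega



/-- Eckart–Young theorem in the Frobenius norm: if `A = U D Vᵀ` is a singular value
decomposition of the real `m × n` matrix `A`, with orthogonal `U`, `V` and decreasing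
nonnegative singular values `σ`, and `N < min m n`, then every matrix `B` of rank at
most `N` satisfies `‖A − B‖_F² ≥ ∑_{k ≥ N} σ k ²` (0-indexed tail), and the bound is
attained by the rank-`N` truncated singular value decomposition of `A`. -/
theorem eckartYoung_frobenius (m n N : ℕ) (A : Matrix (Fin m) (Fin n) ℝ)
    (U : Matrix (Fin m) (Fin m) ℝ) (V : Matrix (Fin n) (Fin n) ℝ)
    (σ : Fin (min m n) → ℝ)
    (hU : U.transpose * U = 1) (hV : V.transpose * V = 1)
    (hσ0 : ∀ k, 0 ≤ σ k) (hσdec : Antitone σ)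
    (hA : A = U * (Matrix.of fun (i : Fin m) (j : Fin n) =>
      if h : (i : ℕ) = (j : ℕ) ∧ (i : ℕ) < min m n then σ ⟨(i : ℕ), h.2⟩ else 0) *
      V.transpose)
    (hN : N < min m n) :
    (∀ B : Matrix (Fin m) (Fin n) ℝ, B.rank ≤ N →
      ∑ k ∈ Finset.univ.filter (fun k : Fin (min m n) => N ≤ (k : ℕ)), σ k ^ 2 ≤
        ∑ i, ∑ j, (A i j - B i j) ^ 2) ∧
    (Matrix.rank (U * (Matrix.of fun (i : Fin m) (j : Fin n) =>
        if h : (i : ℕ) = (j : ℕ) ∧ (i : ℕ) < min m n ∧ (i : ℕ) < N then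
          σ ⟨(i : ℕ), h.2.1⟩ else 0) * V.transpose) ≤ N ∧
      ∑ i, ∑ j, (A i j - (U * (Matrix.of fun (i : Fin m) (j : Fin n) =>
        if h : (i : ℕ) = (j : ℕ) ∧ (i : ℕ) < min m n ∧ (i : ℕ) < N then
          σ ⟨(i : ℕ), h.2.1⟩ else 0) * V.transpose) i j) ^ 2 =
        ∑ k ∈ Finset.univ.filter (fun k : Fin (min m n) => N ≤ (k : ℕ)), σ k ^ 2) := by
  classical
  set D : Matrix (Fin m) (Fin n) ℝ := Matrix.of (fun (i : Fin m) (j : Fin n) =>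
    if h : (i : ℕ) = (j : ℕ) ∧ (i : ℕ) < min m n then σ ⟨(i : ℕ), h.2⟩ else 0) with hD
  set DN : Matrix (Fin m) (Fin n) ℝ := Matrix.of (fun (i : Fin m) (j : Fin n) =>
    if h : (i : ℕ) = (j : ℕ) ∧ (i : ℕ) < min m n ∧ (i : ℕ) < N then
      σ ⟨(i : ℕ), h.2.1⟩ else 0) with hDN
  have hNm : N ≤ m := le_trans hN.le (min_le_left m n)
  have hNn : N ≤ n := le_trans hN.le (min_le_right m n)
  have hVV : V * Vᵀ = 1 := by rwa [mul_eq_one_comm] at hV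
  constructor
  · -- lower bound
    intro B hB
    obtain ⟨P, hP, hBP⟩ := EY_exists_P m n N B hB hNn
    set Q : Matrix (Fin n) (Fin (n - N)) ℝ := Vᵀ * P with hQdef
    have hQ : Qᵀ * Q = 1 := by
      rw [hQdef, Matrix.transpose_mul, Matrix.transpose_transpose,
        Matrix.mul_assoc Pᵀ V (Vᵀ * P), ← Matrix.mul_assoc V Vᵀ P, hVV, Matrix.one_mul, hP]
    set c : Fin n → ℝ := fun k => ∑ j, (Q k j) ^ 2 with hc
    set lam : Fin n → ℝ :=
      fun k => if h : (k : ℕ) < min m n then (σ ⟨(k : ℕ), h⟩) ^ 2 else 0 with hlam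
    -- the entries of D * Q
    have hDQ : ∀ (i : Fin m) (j : Fin (n - N)), (D * Q) i j =
        if h : (i : ℕ) < min m n then
          σ ⟨(i : ℕ), h⟩ * Q ⟨(i : ℕ), lt_of_lt_of_le h (min_le_right m n)⟩ j else 0 := by
      intro i j
      rw [Matrix.mul_apply]
      by_cases h : (i : ℕ) < min m n
      · rw [dif_pos h]
        have hin : (i : ℕ) < n := lt_of_lt_of_le h (min_le_right m n)
        rw [Finset.sum_eq_single (⟨(i : ℕ), hin⟩ : Fin n)]
        · simp [hD, h, hin]
        · intro k _ hk
          rw [hD]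
          simp only [Matrix.of_apply]
          rw [dif_neg, zero_mul]
          rintro ⟨h1, -⟩
          exact hk (Fin.ext h1.symm)
        · intro hk; exact absurd (Finset.mem_univ _) hk
      · rw [dif_neg h]
        apply Finset.sum_eq_zero
        intro k _
        rw [hD]
        simp only [Matrix.of_apply]
        rw [dif_neg, zero_mul]
        rintro ⟨-, h2⟩
        exact h h2
    -- frobenius of D * Q
    have hfrobDQ : ∑ i, ∑ j, ((D * Q) i j) ^ 2
        = ∑ i : Fin m, (if h : (i : ℕ) < min m n then
            σ ⟨(i : ℕ), h⟩ ^ 2 * c ⟨(i : ℕ), lt_of_lt_of_le h (min_le_right m n)⟩ else 0) := by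
      refine Finset.sum_congr rfl fun i _ => ?_
      by_cases h : (i : ℕ) < min m n
      · rw [dif_pos h]
        simp only [hc]
        rw [Finset.mul_sum]
        refine Finset.sum_congr rfl fun j _ => ?_
        rw [hDQ i j, dif_pos h]
        ring
      · rw [dif_neg h]
        apply Finset.sum_eq_zero
        intro j _
        rw [hDQ i j, dif_neg h]
        norm_num
    -- sum of c
    have hsumc : ∑ k, c k = (n : ℝ) - N := by
      have h1 : ∑ k, c k = Matrix.trace (Qᵀ * Q) := EY_frob_eq_trace Q
      rw [h1, hQ, Matrix.trace_one]
      simp [Nat.cast_sub hNn]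
    -- antitone of lam
    have hanti : ∀ k l : Fin n, k ≤ l → lam l ≤ lam k := by
      intro k l hkl
      simp only [hlam]
      by_cases hl : (l : ℕ) < min m n
      · have hk : (k : ℕ) < min m n := lt_of_le_of_lt hkl hl
        rw [dif_pos hl, dif_pos hk]
        have : σ ⟨(l : ℕ), hl⟩ ≤ σ ⟨(k : ℕ), hk⟩ := hσdec (by exact hkl)
        have h0 := hσ0 ⟨(l : ℕ), hl⟩
        nlinarith
      · rw [dif_neg hl]
        by_cases hk : (k : ℕ) < min m n
        · rw [dif_pos hk]; positivity
        · rw [dif_neg hk]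
    -- Abel bound
    have habel := EY_abel n N (lt_of_lt_of_le hN (min_le_right m n)) lam c hanti
      (fun k => Finset.sum_nonneg fun _ _ => sq_nonneg _)
      (fun k => EY_row_le_one Q hQ k) hsumc
    -- identify the filtered sums
    have hid1 : ∑ k ∈ Finset.univ.filter (fun k : Fin (min m n) => N ≤ (k : ℕ)), σ k ^ 2
        = ∑ k ∈ Finset.univ.filter (fun k : Fin n => N ≤ (k : ℕ)), lam k := by
      rw [Finset.sum_filter, Finset.sum_filter]
      have e := EY_sum_cast (a := n) (min_le_right m n)
        (fun t ht => if N ≤ t then σ ⟨t, ht⟩ ^ 2 else 0)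
      calc ∑ k : Fin (min m n), (if N ≤ (k : ℕ) then σ k ^ 2 else 0)
          = ∑ i : Fin n, (if h : (i : ℕ) < min m n then
              (if N ≤ (i : ℕ) then σ ⟨(i : ℕ), h⟩ ^ 2 else 0) else 0) := e.symm
        _ = ∑ i : Fin n, (if N ≤ (i : ℕ) then lam i else 0) := by
            refine Finset.sum_congr rfl fun k _ => ?_
            simp only [hlam]
            split_ifs <;> rfl
    -- identify ∑ lam * c with frob (D*Q)
    have hid2 : ∑ k, lam k * c k = ∑ i, ∑ j, ((D * Q) i j) ^ 2 := by
      rw [hfrobDQ]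
      have e1 := EY_sum_cast (a := m) (min_le_left m n)
        (fun t ht => σ ⟨t, ht⟩ ^ 2 * c ⟨t, lt_of_lt_of_le ht (min_le_right m n)⟩)
      have e2 := EY_sum_cast (a := n) (min_le_right m n)
        (fun t ht => σ ⟨t, ht⟩ ^ 2 * c ⟨t, lt_of_lt_of_le ht (min_le_right m n)⟩)
      calc ∑ k : Fin n, lam k * c k
          = ∑ i : Fin n, (if h : (i : ℕ) < min m n then
              σ ⟨(i : ℕ), h⟩ ^ 2 * c ⟨(i : ℕ), lt_of_lt_of_le h (min_le_right m n)⟩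
              else 0) := by
            refine Finset.sum_congr rfl fun k _ => ?_
            simp only [hlam]
            by_cases h : (k : ℕ) < min m n
            · rw [dif_pos h, dif_pos h, Fin.eta]
            · rw [dif_neg h, dif_neg h, zero_mul]
        _ = ∑ k : Fin (min m n), σ k ^ 2
              * c ⟨(k : ℕ), lt_of_lt_of_le k.isLt (min_le_right m n)⟩ := e2
        _ = ∑ i : Fin m, (if h : (i : ℕ) < min m n then
              σ ⟨(i : ℕ), h⟩ ^ 2 * c ⟨(i : ℕ), lt_of_lt_of_le h (min_le_right m n)⟩
              else 0) := e1.symm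
    -- chain
    have step1 : ∑ i, ∑ j, (((A - B) * P) i j) ^ 2 ≤ ∑ i, ∑ j, ((A - B) i j) ^ 2 :=
      EY_frob_mul_le (A - B) P hP
    have step2 : (A - B) * P = U * (D * Q) := by
      rw [Matrix.sub_mul, hBP, sub_zero, hA, Matrix.mul_assoc (U * D) Vᵀ P,
        Matrix.mul_assoc U D (Vᵀ * P), hQdef]
    have step3 : ∑ i, ∑ j, ((U * (D * Q)) i j) ^ 2 = ∑ i, ∑ j, ((D * Q) i j) ^ 2 :=
      EY_frob_mul_orth_left U (D * Q) hU
    have final : ∑ i, ∑ j, ((A - B) i j) ^ 2 = ∑ i, ∑ j, (A i j - B i j) ^ 2 := by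
      simp [Matrix.sub_apply]
    rw [← final]
    calc ∑ k ∈ Finset.univ.filter (fun k : Fin (min m n) => N ≤ (k : ℕ)), σ k ^ 2
        = ∑ k ∈ Finset.univ.filter (fun k : Fin n => N ≤ (k : ℕ)), lam k := hid1
      _ ≤ ∑ k, lam k * c k := habel
      _ = ∑ i, ∑ j, ((D * Q) i j) ^ 2 := hid2
      _ = ∑ i, ∑ j, (((A - B) * P) i j) ^ 2 := by rw [step2, step3]
      _ ≤ ∑ i, ∑ j, ((A - B) i j) ^ 2 := step1
  · constructor
    · -- rank bound
      set C : Matrix (Fin m) (Fin N) ℝ :=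
        Matrix.of (fun (i : Fin m) (k : Fin N) => if (i : ℕ) = (k : ℕ) then 1 else 0) with hC
      set Rm : Matrix (Fin N) (Fin n) ℝ :=
        Matrix.of (fun (k : Fin N) (j : Fin n) =>
          if h : (k : ℕ) = (j : ℕ) ∧ (k : ℕ) < min m n then σ ⟨(k : ℕ), h.2⟩ else 0) with hRm
      have hCR : C * Rm = DN := by
        ext i j
        rw [Matrix.mul_apply]
        by_cases hiN : (i : ℕ) < N
        · rw [Finset.sum_eq_single (⟨(i : ℕ), hiN⟩ : Fin N)]
          · rw [hC, hRm, hDN]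
            simp only [Matrix.of_apply]
            by_cases h1 : (i : ℕ) = (j : ℕ) ∧ (i : ℕ) < min m n
            · rw [dif_pos h1, dif_pos ⟨h1.1, h1.2, hiN⟩]; simp
            · rw [dif_neg h1, dif_neg (fun hc => h1 ⟨hc.1, hc.2.1⟩)]; simp
          · intro k _ hk
            rw [hC]
            simp only [Matrix.of_apply]
            rw [if_neg, zero_mul]
            intro h1
            exact hk (Fin.ext h1.symm)
          · intro hk; exact absurd (Finset.mem_univ _) hk
        · rw [hDN]
          simp only [Matrix.of_apply]
          rw [dif_neg (fun hc => hiN hc.2.2)]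
          apply Finset.sum_eq_zero
          intro k _
          rw [hC]
          simp only [Matrix.of_apply]
          rw [if_neg, zero_mul]
          intro h1
          omega
      calc Matrix.rank (U * DN * Vᵀ) ≤ Matrix.rank (U * DN) := Matrix.rank_mul_le_left _ _
        _ ≤ Matrix.rank DN := Matrix.rank_mul_le_right _ _
        _ = Matrix.rank (C * Rm) := by rw [hCR]
        _ ≤ Matrix.rank C := Matrix.rank_mul_le_left _ _
        _ ≤ N := by simpa using Matrix.rank_le_card_width C
    · -- error equality
      set T : Matrix (Fin m) (Fin n) ℝ := U * DN * Vᵀ with hT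
      have hsub : A - T = U * (D - DN) * Vᵀ := by
        rw [hA, hT, ← Matrix.sub_mul, ← Matrix.mul_sub]
      have hE : ∀ (i : Fin m) (j : Fin n), (D - DN) i j =
          if h : (i : ℕ) = (j : ℕ) ∧ (i : ℕ) < min m n ∧ N ≤ (i : ℕ) then
            σ ⟨(i : ℕ), h.2.1⟩ else 0 := by
        intro i j
        rw [Matrix.sub_apply, hD, hDN]
        simp only [Matrix.of_apply]
        by_cases h1 : (i : ℕ) = (j : ℕ) ∧ (i : ℕ) < min m n
        · by_cases h2 : (i : ℕ) < N
          · rw [dif_pos h1, dif_pos ⟨h1.1, h1.2, h2⟩, dif_neg (fun hc => absurd hc.2.2 (not_le.mpr h2)), sub_self]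
          · rw [dif_pos h1, dif_neg (fun hc => h2 hc.2.2),
              dif_pos ⟨h1.1, h1.2, le_of_not_gt h2⟩, sub_zero]
        · rw [dif_neg h1, dif_neg (fun hc => h1 ⟨hc.1, hc.2.1⟩),
            dif_neg (fun hc => h1 ⟨hc.1, hc.2.1⟩), sub_zero]
      have hrow : ∀ i : Fin m, ∑ j, ((D - DN) i j) ^ 2 =
          if h : (i : ℕ) < min m n ∧ N ≤ (i : ℕ) then σ ⟨(i : ℕ), h.1⟩ ^ 2 else 0 := by
        intro i
        by_cases h : (i : ℕ) < min m n ∧ N ≤ (i : ℕ)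
        · rw [dif_pos h]
          have hin : (i : ℕ) < n := lt_of_lt_of_le h.1 (min_le_right m n)
          rw [Finset.sum_eq_single (⟨(i : ℕ), hin⟩ : Fin n)]
          · rw [hE, dif_pos ⟨rfl, h.1, h.2⟩]
          · intro j _ hj
            rw [hE, dif_neg]
            · norm_num
            · rintro ⟨h1, -⟩
              exact hj (Fin.ext h1.symm)
          · intro hk; exact absurd (Finset.mem_univ _) hk
        · rw [dif_neg h]
          apply Finset.sum_eq_zero
          intro j _
          rw [hE, dif_neg]
          · norm_num
          · rintro ⟨-, h2, h3⟩
            exact h ⟨h2, h3⟩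
      have hsum1 : ∑ i, ∑ j, (A i j - T i j) ^ 2 = ∑ i, ∑ j, ((D - DN) i j) ^ 2 := by
        have e0 : ∑ i, ∑ j, (A i j - T i j) ^ 2 = ∑ i, ∑ j, ((A - T) i j) ^ 2 := by
          simp [Matrix.sub_apply]
        rw [e0, hsub]
        have e1 : ∑ i, ∑ j, ((U * (D - DN) * Vᵀ) i j) ^ 2
            = ∑ i, ∑ j, ((U * (D - DN)) i j) ^ 2 :=
          EY_frob_mul_orth_right (U * (D - DN)) Vᵀ (by rwa [Matrix.transpose_transpose])
        rw [e1]
        exact EY_frob_mul_orth_left U (D - DN) hU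
      rw [hsum1]
      have hsum2 : ∑ i, ∑ j, ((D - DN) i j) ^ 2
          = ∑ i : Fin m, (if h : (i : ℕ) < min m n then
              (if N ≤ (i : ℕ) then σ ⟨(i : ℕ), h⟩ ^ 2 else 0) else 0) := by
        refine Finset.sum_congr rfl fun i _ => ?_
        rw [hrow i]
        by_cases h1 : (i : ℕ) < min m n
        · by_cases h2 : N ≤ (i : ℕ)
          · rw [dif_pos ⟨h1, h2⟩, dif_pos h1, if_pos h2]
          · rw [dif_neg (fun hc => h2 hc.2), dif_pos h1, if_neg h2]
        · rw [dif_neg (fun hc => h1 hc.1), dif_neg h1]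
      rw [hsum2, Finset.sum_filter]
      exact EY_sum_cast (a := m) (min_le_left m n)
        (fun t ht => if N ≤ t then σ ⟨t, ht⟩ ^ 2 else 0)
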